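/- Let g : ℝⁿ → ℝ be differentiable, h₁ : ℝⁿ → ℝ ∪ {+∞} a proper lower semicontinuous convex function, τ > 0, and u₁, u₂ ∈ ℝⁿ linearly independent such that B = τI + u₁u₁ᵀ − u₂u₂ᵀ is positive definite with inverse H = B⁻¹. Let x, ξ ∈ ℝⁿ, set x̄ = x − H(∇g(x) − ξ), define ζ(α) = x̄ − (α₁/τ)u₁ + α₂(τI + u₁u₁ᵀ)⁻¹u₂, 𝓛(α) = ( u₁ᵀ(x̄ + α₂(τI + u₁u₁ᵀ)⁻¹u₂ − Prox_{(1/τ)h₁}(ζ(α))) + α₁ , u₂ᵀ(x̄ − Prox_{(1/τ)h₁}(ζ(α))) + α₂ ), and let U = [−u₁, u₂] be the n×2 matrix with columns −u₁ and u₂. Then for every α ∈ ℝ², writing x̂ = Prox_{(1/τ)h₁}(ζ(α)), one has U𝓛(α) − (∇g(x) − ξ) − B(x̂ − x) ∈ ∂h₁(x̂). -/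

import Mathlib

open Matrix Filter Topology RealInnerProductSpace

noncomputable section

/-- `n`-dimensional Euclidean space. -/
abbrev Euc (n : ℕ) := EuclideanSpace ℝ (Fin n)

/-- `v` is a subgradient of the extended-real-valued convex function `φ` at `x`. -/
def ESubgradAt {n : ℕ} (φ : Euc n → EReal) (v x : Euc n) : Prop :=
  ∀ y : Euc n, φ x + ((⟪v, y - x⟫ : ℝ) : EReal) ≤ φ y

/-- `v` is a subgradient of the real-valued convex function `φ` at `x`. -/
def RSubgradAt {n : ℕ} (φ : Euc n → ℝ) (v x : Euc n) : Prop :=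
  ∀ y : Euc n, φ x + ⟪v, y - x⟫ ≤ φ y

/-- Convexity of an extended-real-valued function. -/
def EConvexF {n : ℕ} (φ : Euc n → EReal) : Prop :=
  ∀ x y : Euc n, ∀ a b : ℝ, 0 ≤ a → 0 ≤ b → a + b = 1 →
    φ (a • x + b • y) ≤ (a : EReal) * φ x + (b : EReal) * φ y

/-- Properness of an extended-real-valued function: never `⊥` and finite somewhere. -/
def ProperF {n : ℕ} (φ : Euc n → EReal) : Prop :=
  (∀ x, φ x ≠ ⊥) ∧ (∃ x, φ x ≠ ⊤)

/-- The quadratic form `uᵀ B u`. -/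
def quadF {n : ℕ} (B : Matrix (Fin n) (Fin n) ℝ) (u : Euc n) : ℝ :=
  ⟪u, (Matrix.toEuclideanLin B) u⟫

/-- The scaled norm `‖u‖_B = √(uᵀ B u)`. -/
def MNorm {n : ℕ} (B : Matrix (Fin n) (Fin n) ℝ) (u : Euc n) : ℝ :=
  Real.sqrt (quadF B u)

/-- The objective `f = g + h₁ - h₂`. -/
def fObj {n : ℕ} (g : Euc n → ℝ) (h₁ : Euc n → EReal) (h₂ : Euc n → ℝ) (x : Euc n) : EReal :=
  (g x : EReal) + h₁ x - (h₂ x : EReal)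

/-- `p` is the proximal point `Prox_{(1/τ)h₁}(y)`, i.e. the minimizer of
`(1/τ)h₁(·) + ½‖· - y‖²`. -/
def IsProxPt {n : ℕ} (τ : ℝ) (h₁ : Euc n → EReal) (y p : Euc n) : Prop :=
  ∀ w : Euc n, ((τ⁻¹ : ℝ) : EReal) * h₁ p + ((‖p - y‖ ^ 2 / 2 : ℝ) : EReal) ≤
    ((τ⁻¹ : ℝ) : EReal) * h₁ w + ((‖w - y‖ ^ 2 / 2 : ℝ) : EReal)

/-- The matrix `τI + u₁u₁ᵀ`. -/
def Amat {n : ℕ} (τ : ℝ) (u₁ : Euc n) : Matrix (Fin n) (Fin n) ℝ :=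
  τ • (1 : Matrix (Fin n) (Fin n) ℝ) + Matrix.vecMulVec (u₁ : Fin n → ℝ) (u₁ : Fin n → ℝ)

/-- The matrix `B = τI + u₁u₁ᵀ - u₂u₂ᵀ`. -/
def Bprox {n : ℕ} (τ : ℝ) (u₁ u₂ : Euc n) : Matrix (Fin n) (Fin n) ℝ :=
  Amat τ u₁ - Matrix.vecMulVec (u₂ : Fin n → ℝ) (u₂ : Fin n → ℝ)

/-- `ζ(α) = x̄ - (α₁/τ)u₁ + α₂(τI + u₁u₁ᵀ)⁻¹u₂`. -/
def zetaMap {n : ℕ} (τ : ℝ) (u₁ u₂ xb : Euc n) (α : ℝ × ℝ) : Euc n :=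
  xb - (α.1 / τ) • u₁ + α.2 • (Matrix.toEuclideanLin (Amat τ u₁)⁻¹) u₂

/-- The semi-smooth map `𝓛 : ℝ² → ℝ²`, where `P = Prox_{(1/τ)h₁}`. -/
def Lmap {n : ℕ} (τ : ℝ) (u₁ u₂ xb : Euc n) (P : Euc n → Euc n) (α : ℝ × ℝ) : ℝ × ℝ :=
  (⟪u₁, xb + α.2 • (Matrix.toEuclideanLin (Amat τ u₁)⁻¹) u₂ - P (zetaMap τ u₁ u₂ xb α)⟫ + α.1,
   ⟪u₂, xb - P (zetaMap τ u₁ u₂ xb α)⟫ + α.2)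

/-- `p` is the scaled proximal point `Prox_{h₁}^{B}(y)`, i.e. the minimizer of
`h₁(·) + ½‖· - y‖_B²`. -/
def IsScaledProxPt {n : ℕ} (B : Matrix (Fin n) (Fin n) ℝ) (h₁ : Euc n → EReal)
    (y p : Euc n) : Prop :=
  ∀ w : Euc n, h₁ p + ((quadF B (p - y) / 2 : ℝ) : EReal) ≤
    h₁ w + ((quadF B (w - y) / 2 : ℝ) : EReal)


section AuxLemmas

variable {n : ℕ}

private lemma inner_eq_dot' (a b : Euc n) : ⟪a, b⟫ = (a : Fin n → ℝ) ⬝ᵥ (b : Fin n → ℝ) := by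
  simp [PiLp.inner_apply, dotProduct, mul_comm]

private lemma vmv_mulVec' (a b v : Fin n → ℝ) : Matrix.vecMulVec a b *ᵥ v = (b ⬝ᵥ v) • a := by
  funext i
  simp only [Matrix.vecMulVec, Matrix.mulVec, dotProduct, Pi.smul_apply, smul_eq_mul,
    Finset.sum_mul, Matrix.of_apply]
  exact Finset.sum_congr rfl fun j _ => by ring

private lemma tEL_comp' (M N : Matrix (Fin n) (Fin n) ℝ) (v : Euc n) :
    Matrix.toEuclideanLin M (Matrix.toEuclideanLin N v) = Matrix.toEuclideanLin (M * N) v := by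
  ext i
  show (M *ᵥ (N *ᵥ (v : Fin n → ℝ))) i = ((M * N) *ᵥ (v : Fin n → ℝ)) i
  rw [Matrix.mulVec_mulVec]

private lemma tEL_one' (v : Euc n) :
    Matrix.toEuclideanLin (1 : Matrix (Fin n) (Fin n) ℝ) v = v := by
  ext i
  show ((1 : Matrix (Fin n) (Fin n) ℝ) *ᵥ (v : Fin n → ℝ)) i = v i
  rw [Matrix.one_mulVec]

private lemma Amat_apply' (τ : ℝ) (u₁ : Euc n) (v : Euc n) :
    Matrix.toEuclideanLin (Amat τ u₁) v = τ • v + ⟪u₁, v⟫ • u₁ := by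
  ext i
  show ((Amat τ u₁) *ᵥ (v : Fin n → ℝ)) i = _
  rw [Amat, Matrix.add_mulVec, Matrix.smul_mulVec, Matrix.one_mulVec, vmv_mulVec',
    inner_eq_dot']
  rfl

private lemma Bprox_apply' (τ : ℝ) (u₁ u₂ : Euc n) (v : Euc n) :
    Matrix.toEuclideanLin (Bprox τ u₁ u₂) v = τ • v + ⟪u₁, v⟫ • u₁ - ⟪u₂, v⟫ • u₂ := by
  ext i
  show ((Bprox τ u₁ u₂) *ᵥ (v : Fin n → ℝ)) i = _
  rw [Bprox, Amat, Matrix.sub_mulVec, Matrix.add_mulVec, Matrix.smul_mulVec,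
    Matrix.one_mulVec, vmv_mulVec', vmv_mulVec', inner_eq_dot', inner_eq_dot']
  rfl

private lemma Amat_posDef' (τ : ℝ) (hτ : 0 < τ) (u₁ : Euc n) : (Amat τ u₁).PosDef := by
  refine Matrix.PosDef.of_dotProduct_mulVec_pos ?_ ?_
  · ext i j
    simp only [Amat, Matrix.conjTranspose_apply, Matrix.add_apply, Matrix.smul_apply,
      Matrix.one_apply, Matrix.vecMulVec, Matrix.of_apply, star_add, star_smul, star_one,
      star_mul', star_trivial, smul_eq_mul]
    rcases eq_or_ne i j with h | h <;> simp [h, eq_comm, mul_comm]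
  · intro x hx
    have hst : star x = x := rfl
    rw [hst, Amat, Matrix.add_mulVec, Matrix.smul_mulVec, Matrix.one_mulVec, vmv_mulVec',
      dotProduct_add, dotProduct_smul, dotProduct_smul]
    have h1 : 0 < x ⬝ᵥ x := by
      have : x ⬝ᵥ x = ∑ i, x i ^ 2 := by simp [dotProduct, sq]
      rw [this]
      refine Finset.sum_pos' (fun i _ => sq_nonneg _) ?_
      obtain ⟨i, hi⟩ := Function.ne_iff.mp hx
      exact ⟨i, Finset.mem_univ i, by rw [sq]; exact mul_self_pos.mpr hi⟩
    have h2 : (0:ℝ) ≤ ((u₁ : Fin n → ℝ) ⬝ᵥ x) * ((u₁ : Fin n → ℝ) ⬝ᵥ x) := mul_self_nonneg _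
    have := mul_pos hτ h1
    simp only [smul_eq_mul]
    rw [dotProduct_comm x (u₁ : Fin n → ℝ)] at *
    nlinarith

private lemma prox_subgrad' {τ : ℝ} (hτ : 0 < τ) {h₁ : Euc n → EReal}
    (hprop : ProperF h₁) (hconv : EConvexF h₁) {y p : Euc n}
    (hp : IsProxPt τ h₁ y p) : ESubgradAt h₁ (τ • (y - p)) p := by
  have hτi : 0 < τ⁻¹ := inv_pos.mpr hτ
  obtain ⟨w₀, hw₀⟩ := hprop.2
  have hw₀b := hprop.1 w₀
  have hpb := hprop.1 p
  have hpt : h₁ p ≠ ⊤ := by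
    intro htop
    have := hp w₀
    rw [htop] at this
    have h1 : ((τ⁻¹ : ℝ) : EReal) * (⊤ : EReal) = ⊤ := by
      rw [EReal.mul_top_of_pos]; exact_mod_cast hτi
    rw [h1, EReal.top_add_of_ne_bot (by simp)] at this
    have h2 : ((τ⁻¹ : ℝ) : EReal) * h₁ w₀ + ((‖w₀ - y‖ ^ 2 / 2 : ℝ) : EReal) ≠ ⊤ := by
      lift h₁ w₀ to ℝ using ⟨hw₀, hw₀b⟩ with r
      rw [← EReal.coe_mul, ← EReal.coe_add]
      exact EReal.coe_ne_top _
    exact h2 (top_le_iff.mp this)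
  lift h₁ p to ℝ using ⟨hpt, hpb⟩ with a ha
  intro y'
  rcases eq_or_ne (h₁ y') ⊤ with hy' | hy'
  · rw [hy']; exact le_top
  lift h₁ y' to ℝ using ⟨hy', hprop.1 y'⟩ with b hb
  rw [← ha, ← EReal.coe_add, EReal.coe_le_coe_iff]
  have key : ∀ t : ℝ, 0 < t → t ≤ 1 →
      τ⁻¹ * (a - b) ≤ ⟪p - y, y' - p⟫ + t * (‖y' - p‖ ^ 2 / 2) := by
    intro t ht ht1
    have hcomb : (1 - t) • p + t • y' = p + t • (y' - p) := by module
    have hcv := hconv p y' (1 - t) t (by linarith) ht.le (by ring)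
    rw [hcomb, ← ha, ← hb, ← EReal.coe_mul, ← EReal.coe_mul, ← EReal.coe_add] at hcv
    have hwt : h₁ (p + t • (y' - p)) ≠ ⊤ := fun h => by
      rw [h] at hcv; exact (EReal.coe_ne_top _) (top_le_iff.mp hcv)
    lift h₁ (p + t • (y' - p)) to ℝ using ⟨hwt, hprop.1 _⟩ with c hc
    rw [EReal.coe_le_coe_iff] at hcv
    have hineq := hp (p + t • (y' - p))
    rw [← ha, ← hc, ← EReal.coe_mul, ← EReal.coe_mul, ← EReal.coe_add, ← EReal.coe_add,
      EReal.coe_le_coe_iff] at hineq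
    have hnorm : ‖p + t • (y' - p) - y‖ ^ 2
        = ‖p - y‖ ^ 2 + 2 * t * ⟪p - y, y' - p⟫ + t ^ 2 * ‖y' - p‖ ^ 2 := by
      have hd : p + t • (y' - p) - y = (p - y) + t • (y' - p) := by module
      rw [hd, @norm_add_sq_real, real_inner_smul_right, norm_smul]
      simp [mul_pow, abs_of_pos ht]
      ring
    rw [hnorm] at hineq
    have h3 : τ⁻¹ * (t * (a - b)) ≤ t * ⟪p - y, y' - p⟫ + t ^ 2 * (‖y' - p‖ ^ 2 / 2) := by
      nlinarith
    have h4 : τ⁻¹ * (t * (a - b)) / t ≤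
        (t * ⟪p - y, y' - p⟫ + t ^ 2 * (‖y' - p‖ ^ 2 / 2)) / t := by gcongr
    calc τ⁻¹ * (a - b) = τ⁻¹ * (t * (a - b)) / t := by field_simp
      _ ≤ (t * ⟪p - y, y' - p⟫ + t ^ 2 * (‖y' - p‖ ^ 2 / 2)) / t := h4
      _ = ⟪p - y, y' - p⟫ + t * (‖y' - p‖ ^ 2 / 2) := by field_simp
  have key2 : τ⁻¹ * (a - b) ≤ ⟪p - y, y' - p⟫ := by
    apply le_of_forall_pos_le_add
    intro ε hεpos
    have hC0 : (0:ℝ) ≤ ‖y' - p‖ ^ 2 / 2 := by positivity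
    have htpos : 0 < min 1 (ε / (‖y' - p‖ ^ 2 / 2 + 1)) := lt_min one_pos (by positivity)
    have ht1 : min 1 (ε / (‖y' - p‖ ^ 2 / 2 + 1)) ≤ 1 := min_le_left _ _
    have hk := key _ htpos ht1
    have htC : min 1 (ε / (‖y' - p‖ ^ 2 / 2 + 1)) * (‖y' - p‖ ^ 2 / 2) ≤ ε := by
      calc min 1 (ε / (‖y' - p‖ ^ 2 / 2 + 1)) * (‖y' - p‖ ^ 2 / 2)
          ≤ (ε / (‖y' - p‖ ^ 2 / 2 + 1)) * (‖y' - p‖ ^ 2 / 2) :=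
            mul_le_mul_of_nonneg_right (min_le_right _ _) hC0
        _ ≤ ε := by
            rw [div_mul_eq_mul_div, div_le_iff₀ (by positivity)]
            nlinarith
    linarith
  have hflip : ⟪y - p, y' - p⟫ = - ⟪p - y, y' - p⟫ := by
    rw [← inner_neg_left]; congr 1; abel
  have hmul := mul_le_mul_of_nonneg_left key2 hτ.le
  rw [← mul_assoc, mul_inv_cancel₀ hτ.ne', one_mul] at hmul
  nlinarith [real_inner_smul_left (y - p) (y' - p) τ]

end AuxLemmas

/-- the residual identity: `U𝓛(α) - (∇g(x) - ξ) - B(x̂ - x)` is a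
subgradient of `h₁` at `x̂ = Prox_{(1/τ)h₁}(ζ(α))`, where `x̄ = x - B⁻¹(∇g(x) - ξ)`
and `U𝓛(α) = -𝓛(α)₁u₁ + 𝓛(α)₂u₂`. -/
theorem U_Lmap_residual_subgradient
    {n : ℕ} (τ : ℝ) (u₁ u₂ x ξ : Euc n)
    (g : Euc n → ℝ) (g' : Euc n → Euc n)
    (h₁ : Euc n → EReal) (P : Euc n → Euc n)
    (hg : ∀ y : Euc n, HasGradientAt g (g' y) y)
    (hprop : ProperF h₁) (hlsc : LowerSemicontinuous h₁) (hconv : EConvexF h₁)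
    (hτ : 0 < τ)
    (hind : LinearIndependent ℝ ![u₁, u₂])
    (hpd : (Bprox τ u₁ u₂).PosDef)
    (hP : ∀ y : Euc n, IsProxPt τ h₁ y (P y))
    (xb : Euc n)
    (hxb : xb = x - (Matrix.toEuclideanLin (Bprox τ u₁ u₂)⁻¹) (g' x - ξ)) :
    ∀ α : ℝ × ℝ,
      ESubgradAt h₁
        (-(Lmap τ u₁ u₂ xb P α).1 • u₁ + (Lmap τ u₁ u₂ xb P α).2 • u₂ -
          (g' x - ξ) -
          (Matrix.toEuclideanLin (Bprox τ u₁ u₂)) (P (zetaMap τ u₁ u₂ xb α) - x))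
        (P (zetaMap τ u₁ u₂ xb α)) := by
  intro α
  have hτ0 : τ ≠ 0 := hτ.ne'
  have hApd := Amat_posDef' τ hτ u₁
  have hAmul : Amat τ u₁ * (Amat τ u₁)⁻¹ = 1 :=
    Matrix.mul_nonsing_inv _ (isUnit_iff_ne_zero.mpr hApd.det_pos.ne')
  have hBmul : Bprox τ u₁ u₂ * (Bprox τ u₁ u₂)⁻¹ = 1 :=
    Matrix.mul_nonsing_inv _ (isUnit_iff_ne_zero.mpr hpd.det_pos.ne')
  have hw : τ • (Matrix.toEuclideanLin (Amat τ u₁)⁻¹ u₂)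
      + ⟪u₁, Matrix.toEuclideanLin (Amat τ u₁)⁻¹ u₂⟫ • u₁ = u₂ := by
    rw [← Amat_apply', tEL_comp', hAmul, tEL_one']
  have hd : Matrix.toEuclideanLin (Bprox τ u₁ u₂) (x - xb) = g' x - ξ := by
    rw [hxb, sub_sub_cancel, tEL_comp', hBmul, tEL_one']
  have hprx := prox_subgrad' hτ hprop hconv (hP (zetaMap τ u₁ u₂ xb α))
  have hkey : -(Lmap τ u₁ u₂ xb P α).1 • u₁ + (Lmap τ u₁ u₂ xb P α).2 • u₂ -
      (g' x - ξ) -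
      (Matrix.toEuclideanLin (Bprox τ u₁ u₂)) (P (zetaMap τ u₁ u₂ xb α) - x)
      = τ • (zetaMap τ u₁ u₂ xb α - P (zetaMap τ u₁ u₂ xb α)) := by
    simp only [Lmap, zetaMap]
    rw [← hd]
    set w : Euc n := Matrix.toEuclideanLin (Amat τ u₁)⁻¹ u₂ with hwdef
    set q : Euc n := P (xb - (α.1 / τ) • u₁ + α.2 • w) with hqdef
    rw [Bprox_apply', Bprox_apply', ← hw]
    simp only [inner_add_right, inner_sub_right, inner_add_left, inner_sub_left,
      real_inner_smul_right, real_inner_smul_left]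
    match_scalars <;> field_simp <;> ring
  rw [hkey]
  exact hprx
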